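/- Let M be an F_q[[T]]-submodule of F = F_q[[T]]^d with dim_{F_q}(F/M) finite. Then there exist unique nonnegative integers n_1,…,n_d such that LT(M) is the submodule generated by T^{n_1}u_1,…,T^{n_d}u_d, and moreover dim_{F_q}(F/M) = dim_{F_q}(F/LT(M)) = n_1 + ⋯ + n_d. -/

import Mathlib

namespace Spiral

/-- Monomials `T^n u_i` of `F = F_q[[T]]^d` (seat `i` 0-indexed) are encoded by the
natural number `n*d + i`; the usual order on encodings is exactly the hlex order
`T^a u_i ≺ T^b u_j ↔ a < b ∨ (a = b ∧ i < j)`. `leadPos f` is the encoding of the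
`≺`-least monomial appearing in `f` with nonzero coefficient (for `f ≠ 0`). -/
noncomputable def leadPos (d : ℕ) [NeZero d] {Fq : Type*} [Field Fq]
    (f : Fin d → PowerSeries Fq) : ℕ :=
  sInf {p : ℕ | PowerSeries.coeff (p / d) (f ⟨p % d, Nat.mod_lt p (NeZero.pos d)⟩) ≠ 0}

/-- The leading term `LT(f)` of `f ∈ F = F_q[[T]]^d`: the term of `f` supported on its
`≺`-least monomial `T^n u_i` with nonzero coefficient (where `≺` is the hlex order). -/
noncomputable def LTerm (d : ℕ) [NeZero d] {Fq : Type*} [Field Fq]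
    (f : Fin d → PowerSeries Fq) : Fin d → PowerSeries Fq :=
  Pi.single ⟨leadPos d f % d, Nat.mod_lt _ (NeZero.pos d)⟩
    (PowerSeries.monomial (leadPos d f / d)
      (PowerSeries.coeff (leadPos d f / d)
        (f ⟨leadPos d f % d, Nat.mod_lt _ (NeZero.pos d)⟩)))

/-- The leading submodule `LT(M)`: the `F_q[[T]]`-submodule of `F` generated by the
leading terms `LT(f)` of the nonzero elements `f ∈ M`. -/
noncomputable def LTsub (d : ℕ) [NeZero d] {Fq : Type*} [Field Fq]
    (M : Submodule (PowerSeries Fq) (Fin d → PowerSeries Fq)) :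
    Submodule (PowerSeries Fq) (Fin d → PowerSeries Fq) :=
  Submodule.span (PowerSeries Fq) {g | ∃ f ∈ M, f ≠ 0 ∧ LTerm d f = g}

/-- The standard monomial `T^n u_i ∈ F = F_q[[T]]^d`. -/
noncomputable def stdMono (d : ℕ) {Fq : Type*} [Field Fq] (n : ℕ) (i : Fin d) :
    Fin d → PowerSeries Fq :=
  Pi.single i ((PowerSeries.monomial n) 1)

end Spiral

namespace Spiral17

open Spiral PowerSeries

variable {d : ℕ} [NeZero d] {Fq : Type*} [Field Fq]

/-- coefficient of `f` at encoded position `p`. -/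
noncomputable def co (f : Fin d → PowerSeries Fq) (p : ℕ) : Fq :=
  PowerSeries.coeff (p / d) (f ⟨p % d, Nat.mod_lt p (NeZero.pos d)⟩)

lemma enc_mod (n : ℕ) (i : Fin d) : (n * d + (i : ℕ)) % d = i := by
  rw [Nat.mul_add_mod', Nat.mod_eq_of_lt i.isLt]

lemma enc_div (n : ℕ) (i : Fin d) : (n * d + (i : ℕ)) / d = n := by
  rw [mul_comm, Nat.mul_add_div (NeZero.pos d), Nat.div_eq_of_lt i.isLt, add_zero]

lemma dec_eq (p : ℕ) : (p / d) * d + p % d = p := by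
  rw [mul_comm]; exact Nat.div_add_mod p d

lemma co_enc (f : Fin d → PowerSeries Fq) (n : ℕ) (i : Fin d) :
    co f (n * d + (i : ℕ)) = PowerSeries.coeff n (f i) := by
  unfold co
  have h1 : (n * d + (i : ℕ)) / d = n := enc_div n i
  have h2 : (⟨(n * d + (i:ℕ)) % d, Nat.mod_lt _ (NeZero.pos d)⟩ : Fin d) = i :=
    Fin.ext (enc_mod n i)
  rw [h1, h2]

lemma co_add (f g : Fin d → PowerSeries Fq) (p : ℕ) : co (f + g) p = co f p + co g p := by
  simp [co]

lemma co_sub (f g : Fin d → PowerSeries Fq) (p : ℕ) : co (f - g) p = co f p - co g p := by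
  simp [co]

lemma co_smul (c : Fq) (f : Fin d → PowerSeries Fq) (p : ℕ) : co (c • f) p = c * co f p := by
  simp [co]

lemma co_sum {ι : Type*} (s : Finset ι) (F : ι → (Fin d → PowerSeries Fq)) (p : ℕ) :
    co (∑ x ∈ s, F x) p = ∑ x ∈ s, co (F x) p := by
  classical
  induction s using Finset.induction with
  | empty => simp [co]
  | insert _ _ h ih => rw [Finset.sum_insert h, Finset.sum_insert h, co_add, ih]

lemma eq_zero_of_co (f : Fin d → PowerSeries Fq) (h : ∀ p, co f p = 0) : f = 0 := by
  funext i
  ext n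
  have := h (n * d + (i : ℕ))
  rw [co_enc] at this
  simpa using this

lemma co_stdMono (n : ℕ) (i : Fin d) (p : ℕ) :
    co (stdMono d n i : Fin d → PowerSeries Fq) p = if p = n * d + (i : ℕ) then 1 else 0 := by
  unfold co stdMono
  rw [Pi.single_apply]
  split_ifs with h1 h2 h2
  · subst h2; simp [coeff_monomial, enc_div]
  · -- ⟨p % d, _⟩ = i but p ≠ n*d+i : then p/d ≠ n
    rw [coeff_monomial, if_neg]
    intro hdiv
    apply h2
    have : p = (p / d) * d + p % d := (dec_eq p).symm
    rw [this, hdiv]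
    congr 1
    exact congrArg Fin.val h1
  · exfalso; apply h1; ext : 1
    simp [h2, enc_mod, Nat.mod_eq_of_lt i.isLt]
  · simp

lemma leadPos_eq_sInf (f : Fin d → PowerSeries Fq) :
    leadPos d f = sInf {p | co f p ≠ 0} := rfl

lemma co_ne_zero_exists (f : Fin d → PowerSeries Fq) (hf : f ≠ 0) :
    ∃ p, co f p ≠ 0 := by
  by_contra h
  push_neg at h
  exact hf (eq_zero_of_co f h)

lemma co_leadPos_ne (f : Fin d → PowerSeries Fq) (hf : f ≠ 0) :
    co f (leadPos d f) ≠ 0 := by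
  rw [leadPos_eq_sInf]
  exact Nat.sInf_mem (co_ne_zero_exists f hf)

lemma co_eq_zero_of_lt {f : Fin d → PowerSeries Fq} {q : ℕ} (h : q < leadPos d f) :
    co f q = 0 := by
  by_contra hq
  exact absurd (Nat.sInf_le (by exact hq : q ∈ {p | co f p ≠ 0})) (not_le.2 h)

lemma leadPos_eq_of {f : Fin d → PowerSeries Fq} {n : ℕ} (h1 : co f n ≠ 0)
    (h2 : ∀ q < n, co f q = 0) : leadPos d f = n := by
  rw [leadPos_eq_sInf]
  apply le_antisymm (Nat.sInf_le h1)
  apply le_csInf ⟨n, h1⟩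
  intro m hm
  by_contra hmn
  exact hm (h2 m (not_le.1 hmn))

lemma stdMono_ne_zero (n : ℕ) (i : Fin d) : (stdMono d n i : Fin d → PowerSeries Fq) ≠ 0 := by
  intro h
  have : co (stdMono d n i : Fin d → PowerSeries Fq) (n * d + (i : ℕ)) = 0 := by
    rw [h]; simp [co]
  rw [co_stdMono, if_pos rfl] at this
  exact one_ne_zero this

lemma leadPos_stdMono (n : ℕ) (i : Fin d) :
    leadPos d (stdMono d n i : Fin d → PowerSeries Fq) = n * d + (i : ℕ) := by
  apply leadPos_eq_of
  · simp [co_stdMono]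
  · intro q hq
    rw [co_stdMono, if_neg (Nat.ne_of_lt hq)]



lemma co_X_smul_add (f : Fin d → PowerSeries Fq) (q : ℕ) :
    co ((X : PowerSeries Fq) • f) (q + d) = co f q := by
  unfold co
  have h1 : (q + d) / d = q / d + 1 := Nat.add_div_right q (NeZero.pos d)
  have h2 : (⟨(q + d) % d, Nat.mod_lt _ (NeZero.pos d)⟩ : Fin d)
      = ⟨q % d, Nat.mod_lt _ (NeZero.pos d)⟩ := Fin.ext (Nat.add_mod_right q d)
  rw [h1, h2, Pi.smul_apply, smul_eq_mul, coeff_succ_X_mul]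

lemma co_X_smul_lt (f : Fin d → PowerSeries Fq) {p : ℕ} (hp : p < d) :
    co ((X : PowerSeries Fq) • f) p = 0 := by
  unfold co
  have h1 : p / d = 0 := Nat.div_eq_of_lt hp
  rw [h1, Pi.smul_apply, smul_eq_mul, coeff_zero_X_mul]

lemma leadPos_X_smul (f : Fin d → PowerSeries Fq) (hf : f ≠ 0) :
    leadPos d ((X : PowerSeries Fq) • f) = leadPos d f + d := by
  apply leadPos_eq_of
  · rw [co_X_smul_add]; exact co_leadPos_ne f hf
  · intro q hq
    rcases lt_or_ge q d with h | h
    · exact co_X_smul_lt f h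
    · obtain ⟨r, rfl⟩ : ∃ r, q = r + d := ⟨q - d, (Nat.sub_add_cancel h).symm⟩
      rw [co_X_smul_add]
      exact co_eq_zero_of_lt (by omega)

lemma X_smul_ne_zero (f : Fin d → PowerSeries Fq) (hf : f ≠ 0) :
    (X : PowerSeries Fq) • f ≠ 0 := by
  intro h
  apply co_leadPos_ne f hf
  have := congrArg (fun g => co g (leadPos d f + d)) h
  rw [co_X_smul_add] at this
  simpa [co] using this

lemma X_pow_smul_ne_zero (m : ℕ) (f : Fin d → PowerSeries Fq) (hf : f ≠ 0) :
    ((X : PowerSeries Fq) ^ m) • f ≠ 0 := by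
  induction m with
  | zero => simpa using hf
  | succ m ih =>
      rw [pow_succ, mul_comm, mul_smul]
      exact X_smul_ne_zero _ ih

lemma leadPos_X_pow_smul (m : ℕ) (f : Fin d → PowerSeries Fq) (hf : f ≠ 0) :
    leadPos d (((X : PowerSeries Fq) ^ m) • f) = leadPos d f + m * d := by
  induction m with
  | zero => simp
  | succ m ih =>
      rw [pow_succ, mul_comm, mul_smul, leadPos_X_smul _ (X_pow_smul_ne_zero m f hf), ih]
      ring

lemma LTerm_apply (f : Fin d → PowerSeries Fq) (j : Fin d) :
    LTerm d f j = if j = (⟨leadPos d f % d, Nat.mod_lt _ (NeZero.pos d)⟩ : Fin d)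
      then PowerSeries.monomial (leadPos d f / d) (co f (leadPos d f)) else 0 := by
  unfold LTerm co
  rw [Pi.single_apply]

lemma X_pow_dvd_monomial {k n : ℕ} (a : Fq) (h : k ≤ n) :
    (X : PowerSeries Fq) ^ k ∣ PowerSeries.monomial n a := by
  rw [X_pow_dvd_iff]
  intro m hm
  rw [coeff_monomial, if_neg (by omega)]

lemma le_of_X_pow_dvd {k n : ℕ} (h : (X : PowerSeries Fq) ^ k ∣ PowerSeries.monomial n 1) :
    k ≤ n := by
  by_contra hn
  rw [X_pow_dvd_iff] at h
  have := h n (by omega)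
  rw [coeff_monomial, if_pos rfl] at this
  exact one_ne_zero this

/-- The submodule of `f` with `X^(ns i) ∣ f i` for all `i`. -/
noncomputable def Usub (d : ℕ) [NeZero d] (Fq : Type*) [Field Fq] (ns : Fin d → ℕ) :
    Submodule (PowerSeries Fq) (Fin d → PowerSeries Fq) where
  carrier := {f | ∀ i, (X : PowerSeries Fq) ^ (ns i) ∣ f i}
  add_mem' := fun hf hg i => by rw [Pi.add_apply]; exact dvd_add (hf i) (hg i)
  zero_mem' := fun i => by rw [Pi.zero_apply]; exact dvd_zero _
  smul_mem' := fun c f hf i => by rw [Pi.smul_apply, smul_eq_mul]; exact (hf i).mul_left c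

lemma mem_Usub {ns : Fin d → ℕ} {f : Fin d → PowerSeries Fq} :
    f ∈ Usub d Fq ns ↔ ∀ i, (X : PowerSeries Fq) ^ (ns i) ∣ f i := Iff.rfl

lemma stdMono_mem_Usub (ns : Fin d → ℕ) (i : Fin d) :
    (stdMono d (ns i) i : Fin d → PowerSeries Fq) ∈ Usub d Fq ns := by
  intro j
  unfold stdMono
  rw [Pi.single_apply]
  split_ifs with h
  · subst h; exact X_pow_dvd_monomial 1 le_rfl
  · exact dvd_zero _

lemma span_stdMono_eq_Usub (ns : Fin d → ℕ) :
    Submodule.span (PowerSeries Fq) (Set.range fun i => stdMono d (ns i) i) = Usub d Fq ns := by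
  apply le_antisymm
  · rw [Submodule.span_le]
    rintro _ ⟨i, rfl⟩
    exact stdMono_mem_Usub ns i
  · intro f hf
    choose w hw using hf
    have hfe : f = ∑ i, w i • (stdMono d (ns i) i : Fin d → PowerSeries Fq) := by
      funext j
      rw [Finset.sum_apply]
      have : ∀ i, (w i • (stdMono d (ns i) i : Fin d → PowerSeries Fq)) j
          = if j = i then w i * PowerSeries.monomial (ns i) 1 else 0 := by
        intro i
        rw [Pi.smul_apply, smul_eq_mul]
        unfold stdMono
        rw [Pi.single_apply]
        split_ifs <;> simp
      simp_rw [this]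
      rw [Finset.sum_ite_eq Finset.univ j (fun i => w i * PowerSeries.monomial (ns i) 1)]
      rw [if_pos (Finset.mem_univ j), hw j]
      rw [← X_pow_eq, mul_comm]
    rw [hfe]
    exact Submodule.sum_mem _ fun i _ =>
      Submodule.smul_mem _ _ (Submodule.subset_span (Set.mem_range_self i))



section Tail

variable (M : Submodule (PowerSeries Fq) (Fin d → PowerSeries Fq))

/-- every element of a quotient that is `Fq`-finite is killed by a power of `X`. -/
lemma exists_X_pow_smul_eq_zero
    (hM : Module.Finite Fq ((Fin d → PowerSeries Fq) ⧸ M))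
    (v : (Fin d → PowerSeries Fq) ⧸ M) :
    ∃ m : ℕ, ((X : PowerSeries Fq) ^ m) • v = 0 := by
  classical
  set r := Module.finrank Fq ((Fin d → PowerSeries Fq) ⧸ M)
  have hnli : ¬ LinearIndependent Fq (fun j : Fin (r + 1) => ((X : PowerSeries Fq) ^ (j : ℕ)) • v) := by
    intro h
    have := h.fintype_card_le_finrank
    simp [r] at this
  rw [Fintype.not_linearIndependent_iff] at hnli
  obtain ⟨c, hc, j0, hj0⟩ := hnli
  set P : PowerSeries Fq := ∑ j : Fin (r + 1), PowerSeries.C (c j) * (X : PowerSeries Fq) ^ (j : ℕ)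
    with hP
  have hPv : P • v = 0 := by
    rw [hP, Finset.sum_smul]
    rw [← hc]
    apply Finset.sum_congr rfl
    intro j _
    rw [mul_smul, C_eq_algebraMap, algebraMap_smul]
  have hPne : P ≠ 0 := by
    intro h0
    apply hj0
    have : PowerSeries.coeff (j0 : ℕ) P = 0 := by rw [h0]; simp
    rw [hP] at this
    rw [map_sum] at this
    rw [Finset.sum_eq_single j0] at this
    · rwa [coeff_C_mul, coeff_X_pow, if_pos rfl, mul_one] at this
    · intro j _ hj
      rw [coeff_C_mul, coeff_X_pow, if_neg (fun h => hj (Fin.ext h.symm)), mul_zero]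
    · simp
  set m := sInf {m | PowerSeries.coeff m P ≠ 0} with hm
  have hmne : ∃ m, PowerSeries.coeff m P ≠ 0 := by
    by_contra h
    push_neg at h
    exact hPne (PowerSeries.ext h)
  have hmmem : PowerSeries.coeff m P ≠ 0 := Nat.sInf_mem hmne
  have hmlt : ∀ q < m, PowerSeries.coeff q P = 0 := by
    intro q hq
    by_contra h
    exact absurd (Nat.sInf_le (by exact h : q ∈ {p | PowerSeries.coeff p P ≠ 0}))
      (not_le.2 hq)
  obtain ⟨Q, hQ⟩ : (X : PowerSeries Fq) ^ m ∣ P := X_pow_dvd_iff.2 hmlt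
  have hQ0 : PowerSeries.constantCoeff Q ≠ 0 := by
    intro h
    apply hmmem
    have h2 : PowerSeries.coeff m P = PowerSeries.constantCoeff Q := by
      have h3 := coeff_X_pow_mul Q m 0
      rw [zero_add] at h3
      rw [hQ, h3, coeff_zero_eq_constantCoeff_apply]
    rw [h2, h]
  have hQu : IsUnit Q := isUnit_iff_constantCoeff.2 (isUnit_iff_ne_zero.2 hQ0)
  obtain ⟨u, rfl⟩ := hQu
  refine ⟨m, ?_⟩
  have : ((X : PowerSeries Fq) ^ m) = (↑u⁻¹ : PowerSeries Fq) * P := by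
    rw [hQ, ← mul_assoc, mul_comm (↑u⁻¹ : PowerSeries Fq), mul_assoc, Units.inv_mul, mul_one]
  rw [this, mul_smul, hPv, smul_zero]

lemma exists_tail (hM : Module.Finite Fq ((Fin d → PowerSeries Fq) ⧸ M)) :
    ∃ K : ℕ, ∀ f : Fin d → PowerSeries Fq,
      (∀ i, (X : PowerSeries Fq) ^ K ∣ f i) → f ∈ M := by
  classical
  obtain ⟨n, s, hs⟩ := Module.Finite.exists_fin (R := Fq)
    (M := (Fin d → PowerSeries Fq) ⧸ M)
  choose m hm using fun j => exists_X_pow_smul_eq_zero M hM (s j)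
  set K := (Finset.univ : Finset (Fin n)).sup m with hK
  have hall : ∀ v : (Fin d → PowerSeries Fq) ⧸ M, ((X : PowerSeries Fq) ^ K) • v = 0 := by
    intro v
    have hv : v ∈ Submodule.span Fq (Set.range s) := hs ▸ Submodule.mem_top
    induction hv using Submodule.span_induction with
    | mem x hx =>
        obtain ⟨j, rfl⟩ := hx
        have hj : m j ≤ K := Finset.le_sup (Finset.mem_univ j)
        have : (X : PowerSeries Fq) ^ K
            = (X : PowerSeries Fq) ^ (K - m j) * (X : PowerSeries Fq) ^ (m j) := by
          rw [← pow_add, Nat.sub_add_cancel hj]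
        rw [this, mul_smul, hm j, smul_zero]
    | zero => rw [smul_zero]
    | add x y _ _ hx hy => rw [smul_add, hx, hy, add_zero]
    | smul a x _ hx =>
        rw [← algebraMap_smul (PowerSeries Fq) a x, ← mul_smul, mul_comm, mul_smul, hx,
          smul_zero]
  refine ⟨K, fun f hf => ?_⟩
  choose w hw using hf
  have hfw : f = ((X : PowerSeries Fq) ^ K) • w := by
    funext i
    rw [Pi.smul_apply, smul_eq_mul, hw i]
  rw [← Submodule.Quotient.mk_eq_zero]
  rw [hfw, Submodule.Quotient.mk_smul]
  exact hall _

end Tail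



section NS

variable (M : Submodule (PowerSeries Fq) (Fin d → PowerSeries Fq))

/-- set of `n` such that some nonzero element of `M` has lead monomial `T^n u_i`. -/
def AS (i : Fin d) : Set ℕ := {n | ∃ f ∈ M, f ≠ 0 ∧ leadPos d f = n * d + (i : ℕ)}

noncomputable def nsM (i : Fin d) : ℕ := sInf (AS M i)

lemma stdMono_mem_of_tail {K : ℕ}
    (hK : ∀ f : Fin d → PowerSeries Fq, (∀ i, (X : PowerSeries Fq) ^ K ∣ f i) → f ∈ M)
    (n : ℕ) (hn : K ≤ n) (i : Fin d) :
    (stdMono d n i : Fin d → PowerSeries Fq) ∈ M := by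
  apply hK
  intro j
  unfold stdMono
  rw [Pi.single_apply]
  split_ifs
  · exact X_pow_dvd_monomial 1 hn
  · exact dvd_zero _

lemma AS_nonempty {K : ℕ}
    (hK : ∀ f : Fin d → PowerSeries Fq, (∀ i, (X : PowerSeries Fq) ^ K ∣ f i) → f ∈ M)
    (i : Fin d) : (AS M i).Nonempty :=
  ⟨K, stdMono d K i, stdMono_mem_of_tail M hK K le_rfl i, stdMono_ne_zero K i,
    leadPos_stdMono K i⟩

lemma nsM_mem {K : ℕ}
    (hK : ∀ f : Fin d → PowerSeries Fq, (∀ i, (X : PowerSeries Fq) ^ K ∣ f i) → f ∈ M)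
    (i : Fin d) :
    ∃ f ∈ M, f ≠ 0 ∧ leadPos d f = nsM M i * d + (i : ℕ) :=
  Nat.sInf_mem (AS_nonempty M hK i)

lemma nsM_le (g : Fin d → PowerSeries Fq) (hg : g ∈ M) (hg0 : g ≠ 0) :
    nsM M ⟨leadPos d g % d, Nat.mod_lt _ (NeZero.pos d)⟩ ≤ leadPos d g / d := by
  apply Nat.sInf_le
  exact ⟨g, hg, hg0, (dec_eq _).symm⟩

lemma Usub_le (ns : Fin d → ℕ) (g : Fin d → PowerSeries Fq) (hg : g ∈ Usub d Fq ns)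
    (hg0 : g ≠ 0) :
    ns ⟨leadPos d g % d, Nat.mod_lt _ (NeZero.pos d)⟩ ≤ leadPos d g / d := by
  set i : Fin d := ⟨leadPos d g % d, Nat.mod_lt _ (NeZero.pos d)⟩ with hi
  by_contra h
  apply co_leadPos_ne g hg0
  show PowerSeries.coeff (leadPos d g / d) (g i) = 0
  have := hg i
  rw [X_pow_dvd_iff] at this
  exact this _ (not_le.1 h)

lemma LTsub_eq_Usub {K : ℕ}
    (hK : ∀ f : Fin d → PowerSeries Fq, (∀ i, (X : PowerSeries Fq) ^ K ∣ f i) → f ∈ M) :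
    LTsub d M = Usub d Fq (nsM M) := by
  apply le_antisymm
  · rw [LTsub, Submodule.span_le]
    rintro _ ⟨f, hfM, hf0, rfl⟩
    intro j
    rw [LTerm_apply]
    split_ifs with hj
    · subst hj
      exact X_pow_dvd_monomial _ (nsM_le M f hfM hf0)
    · exact dvd_zero _
  · rw [← span_stdMono_eq_Usub, Submodule.span_le]
    rintro _ ⟨i, rfl⟩
    obtain ⟨g, hgM, hg0, hlp⟩ := nsM_mem M hK i
    set a : Fq := co g (leadPos d g) with ha
    have ha0 : a ≠ 0 := co_leadPos_ne g hg0
    have hmod : leadPos d g % d = (i : ℕ) := by rw [hlp, enc_mod]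
    have hifin : (⟨leadPos d g % d, Nat.mod_lt _ (NeZero.pos d)⟩ : Fin d) = i :=
      Fin.ext hmod
    have hdiv : leadPos d g / d = nsM M i := by rw [hlp, enc_div]
    have key : (stdMono d (nsM M i) i : Fin d → PowerSeries Fq)
        = PowerSeries.C a⁻¹ • LTerm d g := by
      funext j
      rw [Pi.smul_apply, LTerm_apply, hifin, hdiv]
      unfold stdMono
      rw [Pi.single_apply]
      split_ifs with hj
      · rw [smul_eq_mul]
        ext k
        rw [coeff_monomial, coeff_C_mul, coeff_monomial]
        split_ifs
        · rw [← ha, inv_mul_cancel₀ ha0]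
        · rw [mul_zero]
      · rw [smul_zero]
    show (stdMono d (nsM M i) i : Fin d → PowerSeries Fq) ∈ LTsub d M
    rw [key]
    exact Submodule.smul_mem _ _ (Submodule.subset_span ⟨g, hgM, hg0, rfl⟩)

end NS



section Dim

theorem finrank_quot (N : Submodule (PowerSeries Fq) (Fin d → PowerSeries Fq))
    (ns : Fin d → ℕ) (K : ℕ)
    (hK : ∀ f : Fin d → PowerSeries Fq, (∀ i, (X : PowerSeries Fq) ^ K ∣ f i) → f ∈ N)
    (hwit : ∀ i, ∃ g ∈ N, g ≠ 0 ∧ leadPos d g = ns i * d + (i : ℕ))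
    (hlow : ∀ g ∈ N, g ≠ 0 →
      ns ⟨leadPos d g % d, Nat.mod_lt _ (NeZero.pos d)⟩ ≤ leadPos d g / d) :
    Module.finrank Fq ((Fin d → PowerSeries Fq) ⧸ N) = ∑ i, ns i := by
  classical
  set π : (Fin d → PowerSeries Fq) →ₗ[Fq] ((Fin d → PowerSeries Fq) ⧸ N) :=
    (N.mkQ).restrictScalars Fq with hπdef
  have hπ : ∀ f, π f = Submodule.Quotient.mk f := fun _ => rfl
  have hπ0 : ∀ f ∈ N, π f = 0 := fun f hf => by
    rw [hπ]; exact (Submodule.Quotient.mk_eq_zero N).2 hf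
  set b : ((i : Fin d) × Fin (ns i)) → ((Fin d → PowerSeries Fq) ⧸ N) :=
    fun x => π (stdMono d (x.2 : ℕ) x.1) with hb
  -- linear independence
  have hli : LinearIndependent Fq b := by
    rw [Fintype.linearIndependent_iff]
    intro c hc
    by_contra hne
    push_neg at hne
    obtain ⟨x0, hx0⟩ := hne
    set h : Fin d → PowerSeries Fq :=
      ∑ x : (i : Fin d) × Fin (ns i), c x • stdMono d (x.2 : ℕ) x.1 with hh
    have hhN : h ∈ N := by
      rw [← Submodule.Quotient.mk_eq_zero, ← hπ, hh, map_sum]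
      rw [← hc]
      apply Finset.sum_congr rfl
      intro x _
      rw [map_smul]
    have hco : ∀ p, co h p
        = ∑ x : (i : Fin d) × Fin (ns i), c x * (if p = (x.2 : ℕ) * d + (x.1 : ℕ) then 1 else 0) := by
      intro p
      rw [hh, co_sum]
      apply Finset.sum_congr rfl
      intro x _
      rw [co_smul, co_stdMono]
    have hcoenc : ∀ x : (i : Fin d) × Fin (ns i), co h ((x.2 : ℕ) * d + (x.1 : ℕ)) = c x := by
      intro x
      rw [hco]
      rw [Finset.sum_eq_single x]
      · rw [if_pos rfl, mul_one]
      · rintro y _ hy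
        rw [if_neg, mul_zero]
        intro hxy
        apply hy
        have hi : (y.1 : ℕ) = (x.1 : ℕ) := by
          simpa [enc_mod, Nat.mod_eq_of_lt x.1.isLt, Nat.mod_eq_of_lt y.1.isLt] using congrArg (· % d) hxy.symm
        have hk : (y.2 : ℕ) = (x.2 : ℕ) := by
          simpa [enc_div] using congrArg (· / d) hxy.symm
        obtain ⟨i1, k1⟩ := x
        obtain ⟨i2, k2⟩ := y
        simp only at hi hk
        have : i2 = i1 := Fin.ext hi
        subst this
        rw [Fin.ext hk]
      · simp
    have hne0 : h ≠ 0 := by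
      intro h0
      apply hx0
      rw [← hcoenc x0, h0]
      simp [co]
    have hl := co_leadPos_ne h hne0
    have hex : ∃ y : (i : Fin d) × Fin (ns i),
        leadPos d h = (y.2 : ℕ) * d + (y.1 : ℕ) ∧ c y ≠ 0 := by
      by_contra hnone
      push_neg at hnone
      apply hl
      rw [hco]
      apply Finset.sum_eq_zero
      intro y _
      by_cases hy : leadPos d h = (y.2 : ℕ) * d + (y.1 : ℕ)
      · rw [hnone y hy, zero_mul]
      · rw [if_neg hy, mul_zero]
    obtain ⟨y, hy1, hy2⟩ := hex
    have hle := hlow h hhN hne0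
    have hm : leadPos d h % d = (y.1 : ℕ) := by rw [hy1, enc_mod]
    have hd : leadPos d h / d = (y.2 : ℕ) := by rw [hy1, enc_div]
    rw [hd] at hle
    have : ns ⟨leadPos d h % d, Nat.mod_lt _ (NeZero.pos d)⟩ = ns y.1 := by
      congr 1
      exact Fin.ext hm
    rw [this] at hle
    exact absurd hle (not_le.2 y.2.isLt)
  -- spanning
  have hred : ∀ j : ℕ, ∀ f : Fin d → PowerSeries Fq,
      (∀ p, co f p ≠ 0 → K * d - j ≤ p) →
      π f ∈ Submodule.span Fq (Set.range b) := by
    intro j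
    induction j with
    | zero =>
        intro f hf
        have hfN : f ∈ N := by
          apply hK
          intro i
          rw [X_pow_dvd_iff]
          intro mm hmm
          by_contra hc0
          have h1 := hf (mm * d + (i : ℕ)) (by rw [co_enc]; exact hc0)
          have h2 : mm * d + (i : ℕ) < K * d := by
            have h3 : (mm + 1) * d ≤ K * d := Nat.mul_le_mul_right d hmm
            have h4 : mm * d + (i : ℕ) < (mm + 1) * d := by
              have := i.isLt
              rw [add_mul, one_mul]
              omega
            omega
          omega
        rw [hπ0 f hfN]
        exact Submodule.zero_mem _
    | succ j ih =>
        intro f hf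
        by_cases hjd : K * d - j = 0
        · exact ih f (fun p hp => by omega)
        have hn1 : K * d - j = (K * d - (j + 1)) + 1 := by omega
        set n := K * d - (j + 1) with hn
        have hfz : ∀ p < n, co f p = 0 := by
          intro p hp
          by_contra hh
          exact absurd (hf p hh) (by omega)
        by_cases h0 : co f n = 0
        · apply ih f
          intro p hp
          rw [hn1]
          rcases Nat.lt_or_ge p (n + 1) with h | h
          · rcases Nat.lt_or_ge p n with h' | h'
            · exact absurd (hfz p h') hp
            · have : p = n := by omega
              subst this
              exact absurd h0 hp
          · omega
        set i : Fin d := ⟨n % d, Nat.mod_lt _ (NeZero.pos d)⟩ with hi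
        set k := n / d with hk
        have hnk : n = k * d + (i : ℕ) := (dec_eq n).symm
        by_cases hkn : k < ns i
        · set g := f - co f n • stdMono d k i with hg
          have hgmem : π g ∈ Submodule.span Fq (Set.range b) := by
            apply ih
            intro p hp
            rw [hn1]
            by_contra hple
            push_neg at hple
            apply hp
            rw [hg, co_sub, co_smul, co_stdMono]
            rcases Nat.lt_or_ge p n with h | h
            · rw [hfz p h, if_neg (by omega), mul_zero, sub_zero]
            · have : p = n := by omega
              subst this
              rw [if_pos hnk, mul_one, sub_self]
          have hfg : f = g + co f n • stdMono d k i := by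
            rw [hg, sub_add_cancel]
          rw [hfg, map_add, map_smul]
          apply Submodule.add_mem _ hgmem
          apply Submodule.smul_mem
          have : π (stdMono d k i) = b ⟨i, ⟨k, hkn⟩⟩ := rfl
          rw [this]
          exact Submodule.subset_span (Set.mem_range_self _)
        · push_neg at hkn
          obtain ⟨g₀, hg₀N, hg₀0, hlp₀⟩ := hwit i
          set g₁ := ((X : PowerSeries Fq) ^ (k - ns i)) • g₀ with hg1
          have hg₁N : g₁ ∈ N := Submodule.smul_mem _ _ hg₀N
          have hg₁0 : g₁ ≠ 0 := X_pow_smul_ne_zero _ _ hg₀0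
          have hlp₁ : leadPos d g₁ = n := by
            rw [hg1, leadPos_X_pow_smul _ _ hg₀0, hlp₀]
            have h5 : ns i * d + (k - ns i) * d = k * d := by
              rw [← add_mul, Nat.add_sub_cancel' hkn]
            omega
          set a := co g₁ n with ha
          have ha0 : a ≠ 0 := by
            rw [ha, ← hlp₁]
            exact co_leadPos_ne _ hg₁0
          set f' := f - (co f n * a⁻¹) • g₁ with hf'
          have hmem' : π f' ∈ Submodule.span Fq (Set.range b) := by
            apply ih
            intro p hp
            rw [hn1]
            by_contra hple
            push_neg at hple
            apply hp
            rw [hf', co_sub, co_smul]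
            rcases Nat.lt_or_ge p n with h | h
            · rw [hfz p h, co_eq_zero_of_lt (by omega : p < leadPos d g₁), mul_zero, sub_zero]
            · have : p = n := by omega
              subst this
              rw [← ha, mul_assoc, inv_mul_cancel₀ ha0, mul_one, sub_self]
          have hfg : f = f' + (co f n * a⁻¹) • g₁ := by
            rw [hf', sub_add_cancel]
          rw [hfg, map_add, map_smul, hπ0 g₁ hg₁N, smul_zero, add_zero]
          exact hmem'
  have hsp : ⊤ ≤ Submodule.span Fq (Set.range b) := by
    intro v _
    obtain ⟨f, rfl⟩ := Submodule.Quotient.mk_surjective N v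
    rw [← hπ]
    exact hred (K * d) f (fun p _ => by omega)
  have hB := Module.Basis.mk hli hsp
  rw [Module.finrank_eq_card_basis hB, Fintype.card_sigma]
  simp

end Dim

end Spiral17

open Spiral in
/-- Let `M` be an `F_q[[T]]`-submodule of `F = F_q[[T]]^d` with
`dim_{F_q}(F/M)` finite. Then there exist unique `n₁,…,n_d ∈ ℕ` such that `LT(M)` is the
submodule generated by `T^{n₁}u₁,…,T^{n_d}u_d`, and moreover
`dim_{F_q}(F/M) = dim_{F_q}(F/LT(M)) = n₁ + ⋯ + n_d`. -/
theorem statement17 (d : ℕ) [NeZero d] (Fq : Type*) [Field Fq] [Fintype Fq]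
    (M : Submodule (PowerSeries Fq) (Fin d → PowerSeries Fq))
    (hM : Module.Finite Fq ((Fin d → PowerSeries Fq) ⧸ M)) :
    (∃! ns : Fin d → ℕ, LTsub d M =
      Submodule.span (PowerSeries Fq) (Set.range fun i => stdMono d (ns i) i)) ∧
    Module.finrank Fq ((Fin d → PowerSeries Fq) ⧸ M) =
      Module.finrank Fq ((Fin d → PowerSeries Fq) ⧸ LTsub d M) ∧
    ∀ ns : Fin d → ℕ,
      LTsub d M =
        Submodule.span (PowerSeries Fq) (Set.range fun i => stdMono d (ns i) i) →
      Module.finrank Fq ((Fin d → PowerSeries Fq) ⧸ M) = ∑ i, ns i := by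
  classical
  obtain ⟨K, hK⟩ := Spiral17.exists_tail M hM
  set ns := Spiral17.nsM M with hns
  have hLT : LTsub d M = Spiral17.Usub d Fq ns := Spiral17.LTsub_eq_Usub M hK
  have hspan : LTsub d M
      = Submodule.span (PowerSeries Fq) (Set.range fun i => stdMono d (ns i) i) := by
    rw [hLT, Spiral17.span_stdMono_eq_Usub]
  have hap : ∀ (m : ℕ) (i : Fin d),
      (stdMono d m i : Fin d → PowerSeries Fq) i = PowerSeries.monomial m 1 :=
    fun m i => Pi.single_eq_same i _
  have huniq : ∀ ms : Fin d → ℕ,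
      LTsub d M = Submodule.span (PowerSeries Fq) (Set.range fun i => stdMono d (ms i) i) →
      ms = ns := by
    intro ms hms
    have h1 : Spiral17.Usub d Fq ms = Spiral17.Usub d Fq ns := by
      rw [← Spiral17.span_stdMono_eq_Usub, ← hms, hLT]
    funext i
    have e1 : (stdMono d (ms i) i : Fin d → PowerSeries Fq) ∈ Spiral17.Usub d Fq ns :=
      h1 ▸ Spiral17.stdMono_mem_Usub ms i
    have e2 : (stdMono d (ns i) i : Fin d → PowerSeries Fq) ∈ Spiral17.Usub d Fq ms :=
      h1.symm ▸ Spiral17.stdMono_mem_Usub ns i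
    have d1 := e1 i
    have d2 := e2 i
    rw [hap] at d1 d2
    exact le_antisymm (Spiral17.le_of_X_pow_dvd d2) (Spiral17.le_of_X_pow_dvd d1)
  have hrank1 : Module.finrank Fq ((Fin d → PowerSeries Fq) ⧸ M) = ∑ i, ns i :=
    Spiral17.finrank_quot M ns K hK (fun i => Spiral17.nsM_mem M hK i)
      (fun g hg hg0 => Spiral17.nsM_le M g hg hg0)
  set K' := (Finset.univ : Finset (Fin d)).sup ns with hK'def
  have hK' : ∀ f : Fin d → PowerSeries Fq,
      (∀ i, (PowerSeries.X : PowerSeries Fq) ^ K' ∣ f i) → f ∈ LTsub d M := by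
    intro f hf
    rw [hLT]
    intro i
    exact dvd_trans (pow_dvd_pow _ (Finset.le_sup (Finset.mem_univ i))) (hf i)
  have hwit' : ∀ i : Fin d, ∃ g ∈ LTsub d M, g ≠ 0 ∧ leadPos d g = ns i * d + (i : ℕ) :=
    fun i => ⟨stdMono d (ns i) i, hLT ▸ Spiral17.stdMono_mem_Usub ns i,
      Spiral17.stdMono_ne_zero _ _, Spiral17.leadPos_stdMono _ _⟩
  have hlow' : ∀ g ∈ LTsub d M, g ≠ 0 →
      ns ⟨leadPos d g % d, Nat.mod_lt _ (NeZero.pos d)⟩ ≤ leadPos d g / d :=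
    fun g hg hg0 => Spiral17.Usub_le ns g (hLT ▸ hg) hg0
  have hrank2 : Module.finrank Fq ((Fin d → PowerSeries Fq) ⧸ LTsub d M) = ∑ i, ns i :=
    Spiral17.finrank_quot (LTsub d M) ns K' hK' hwit' hlow'
  refine ⟨⟨ns, hspan, huniq⟩, by rw [hrank1, hrank2], ?_⟩
  intro ms hms
  rw [huniq ms hms]
  exact hrank1
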